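/- Let n ≥ 1 and p ≥ 1. Let F, G be vectors of complex numbers in the unit disc, F of length n and G of length 2n−1, with approximations F̂, Ĝ in the unit disc, and define H_t := (1/n) ∑_{s=0}^{n−1} F_s G_{(t+n−1)−s} for 0 ≤ t < n. Then |H_t| ≤ 1, and if Ĥ_t := ρ(W_t / (2^{2p} n)) where W_t := ∑_{s=0}^{n−1} (2^p F̂_s)(2^p Ĝ_{(t+n−1)−s}), then 2^p |Ĥ_t − H_t| ≤ √2 + max_s ε(F̂_s) + max_j ε(Ĝ_j) for all t. -/

import Mathlib

open Complex Finset

noncomputable def rho0 (x : ℝ) : ℤ := if 0 ≤ x then ⌊x⌋ else ⌈x⌉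

noncomputable def rho (p : ℕ) (z : ℂ) : ℂ :=
  (2 : ℂ) ^ (-(p : ℤ)) * ((rho0 ((2 : ℝ) ^ p * z.re) : ℂ) + (rho0 ((2 : ℝ) ^ p * z.im) : ℂ) * Complex.I)

lemma rho0_err (x : ℝ) : |(rho0 x : ℝ) - x| ≤ 1 := by
  unfold rho0
  split_ifs with h
  · rw [abs_le]
    constructor <;> push_cast <;> linarith [Int.floor_le x, Int.lt_floor_add_one x]
  · rw [abs_le]
    constructor <;> push_cast <;> linarith [Int.le_ceil x, Int.ceil_lt_add_one x]

lemma rho_err (p : ℕ) (z : ℂ) : ‖rho p z - z‖ ≤ Real.sqrt 2 * (2 : ℝ) ^ (-(p : ℤ)) := by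
  set a := (2:ℝ)^p * z.re with ha
  set b := (2:ℝ)^p * z.im with hb
  have hinv : (2:ℂ)^(-(p:ℤ)) * (2:ℂ)^(p:ℕ) = 1 := by
    rw [← zpow_natCast (2:ℂ) p, ← zpow_add₀ (by norm_num : (2:ℂ) ≠ 0)]
    simp
  have hz : z = (2 : ℂ) ^ (-(p : ℤ)) * ((a : ℂ) + (b : ℂ) * Complex.I) := by
    rw [ha, hb]
    push_cast
    rw [mul_add, ← mul_assoc, hinv, one_mul, ← mul_assoc, ← mul_assoc, hinv, one_mul,
      Complex.re_add_im]
  have hdiff : rho p z - z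
      = (2:ℂ)^(-(p:ℤ)) * ((((rho0 a : ℝ) - a : ℝ) : ℂ) + (((rho0 b : ℝ) - b : ℝ) : ℂ) * Complex.I) := by
    rw [rho, ← ha, ← hb]
    nth_rewrite 1 [hz]
    push_cast
    ring
  rw [hdiff, norm_mul]
  have h1 : ‖(2:ℂ)^(-(p:ℤ))‖ = (2:ℝ)^(-(p:ℤ)) := by
    rw [norm_zpow]; simp
  rw [h1, mul_comm]
  gcongr
  rw [Complex.norm_add_mul_I]
  apply Real.sqrt_le_sqrt
  have h2 := rho0_err a
  have h3 := rho0_err b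
  nlinarith [_root_.sq_abs ((rho0 a : ℝ) - a), _root_.sq_abs ((rho0 b : ℝ) - b),
    abs_nonneg ((rho0 a : ℝ) - a), abs_nonneg ((rho0 b : ℝ) - b)]

theorem convolution_error (p n : ℕ) (hp : 1 ≤ p) (hn : 1 ≤ n)
    (F G Fh Gh : ℕ → ℂ)
    (hF : ∀ s < n, ‖F s‖ ≤ 1)
    (hG : ∀ j < 2 * n - 1, ‖G j‖ ≤ 1)
    (hFh : ∀ s < n, ‖Fh s‖ ≤ 1)
    (hGh : ∀ j < 2 * n - 1, ‖Gh j‖ ≤ 1)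
    (eF eG : ℝ)
    (heF : ∀ s < n, (2 : ℝ) ^ p * ‖Fh s - F s‖ ≤ eF)
    (heG : ∀ j < 2 * n - 1, (2 : ℝ) ^ p * ‖Gh j - G j‖ ≤ eG)
    (H W Hh : ℕ → ℂ)
    (hH : ∀ t, H t = (1 / (n : ℂ)) * ∑ s ∈ Finset.range n, F s * G (t + n - 1 - s))
    (hW : ∀ t, W t = ∑ s ∈ Finset.range n,
      ((2 : ℂ) ^ p * Fh s) * ((2 : ℂ) ^ p * Gh (t + n - 1 - s)))
    (hHh : ∀ t, Hh t = rho p (W t / ((2 : ℂ) ^ (2 * p) * n))) :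
    ∀ t < n, ‖H t‖ ≤ 1 ∧
      (2 : ℝ) ^ p * ‖Hh t - H t‖ ≤ Real.sqrt 2 + eF + eG := by
  intro t ht
  have hn0 : (n : ℂ) ≠ 0 := Nat.cast_ne_zero.mpr (by omega)
  have hnR : (0:ℝ) < n := by exact_mod_cast hn
  have hidx : ∀ s < n, t + n - 1 - s < 2 * n - 1 := by intro s hs; omega
  have habsH : ‖H t‖ ≤ 1 := by
    rw [hH t, norm_mul, norm_div, norm_one, Complex.norm_natCast]
    have hS : ‖∑ s ∈ Finset.range n, F s * G (t + n - 1 - s)‖ ≤ n := by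
      refine le_trans (norm_sum_le _ _) ?_
      calc ∑ s ∈ Finset.range n, ‖F s * G (t + n - 1 - s)‖
          ≤ ∑ s ∈ Finset.range n, 1 := by
            apply Finset.sum_le_sum
            intro s hs
            rw [norm_mul]
            exact mul_le_one₀ (hF s (Finset.mem_range.mp hs)) (norm_nonneg _)
              (hG _ (hidx s (Finset.mem_range.mp hs)))
        _ = n := by simp
    calc (1 / (n:ℝ)) * ‖∑ s ∈ Finset.range n, F s * G (t + n - 1 - s)‖
        ≤ (1 / (n:ℝ)) * n := mul_le_mul_of_nonneg_left hS (by positivity)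
      _ = 1 := by field_simp
  refine ⟨habsH, ?_⟩
  set z : ℂ := W t / ((2 : ℂ) ^ (2 * p) * n) with hz
  have h2p : ((2:ℂ)^(2*p)) ≠ 0 := pow_ne_zero _ (by norm_num)
  have hsum2p : (∑ s ∈ Finset.range n, ((2 : ℂ) ^ p * Fh s) * ((2 : ℂ) ^ p * Gh (t + n - 1 - s)))
      = (2:ℂ)^(2*p) * ∑ s ∈ Finset.range n, Fh s * Gh (t + n - 1 - s) := by
    rw [Finset.mul_sum]
    refine Finset.sum_congr rfl fun s _ => ?_
    rw [two_mul, pow_add]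
    ring
  have hzformula : z = (1 / (n : ℂ)) * ∑ s ∈ Finset.range n, Fh s * Gh (t + n - 1 - s) := by
    rw [hz, hW t, hsum2p, mul_div_mul_left _ _ h2p, one_div, inv_mul_eq_div]
  have herr1 : ‖Hh t - z‖ ≤ Real.sqrt 2 * (2:ℝ)^(-(p:ℤ)) := by
    rw [hHh t]
    exact rho_err p z
  have hsumbound : (2:ℝ)^p * ‖∑ s ∈ Finset.range n,
      (Fh s * Gh (t+n-1-s) - F s * G (t+n-1-s))‖ ≤ (eF + eG) * n := by
    calc (2:ℝ)^p * ‖∑ s ∈ Finset.range n, (Fh s * Gh (t+n-1-s) - F s * G (t+n-1-s))‖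
        ≤ (2:ℝ)^p * ∑ s ∈ Finset.range n, ‖Fh s * Gh (t+n-1-s) - F s * G (t+n-1-s)‖ := by
          gcongr
          exact norm_sum_le _ _
      _ = ∑ s ∈ Finset.range n, (2:ℝ)^p * ‖Fh s * Gh (t+n-1-s) - F s * G (t+n-1-s)‖ := by
          rw [Finset.mul_sum]
      _ ≤ ∑ s ∈ Finset.range n, (eF + eG) := by
          apply Finset.sum_le_sum
          intro s hs
          have hs' := Finset.mem_range.mp hs
          have hj := hidx s hs'
          have key : Fh s * Gh (t+n-1-s) - F s * G (t+n-1-s)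
              = Fh s * (Gh (t+n-1-s) - G (t+n-1-s)) + (Fh s - F s) * G (t+n-1-s) := by ring
          rw [key]
          calc (2:ℝ)^p * ‖Fh s * (Gh (t+n-1-s) - G (t+n-1-s)) + (Fh s - F s) * G (t+n-1-s)‖
              ≤ (2:ℝ)^p * (‖Fh s‖ * ‖Gh (t+n-1-s) - G (t+n-1-s)‖
                + ‖Fh s - F s‖ * ‖G (t+n-1-s)‖) := by
                gcongr
                refine le_trans (norm_add_le _ _) ?_
                rw [norm_mul, norm_mul]
            _ ≤ (2:ℝ)^p * (1 * ‖Gh (t+n-1-s) - G (t+n-1-s)‖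
                + ‖Fh s - F s‖ * 1) := by
                gcongr
                · exact hFh s hs'
                · exact hG _ hj
            _ = (2:ℝ)^p * ‖Fh s - F s‖ + (2:ℝ)^p * ‖Gh (t+n-1-s) - G (t+n-1-s)‖ := by ring
            _ ≤ eF + eG := add_le_add (heF s hs') (heG _ hj)
      _ = (eF + eG) * n := by rw [Finset.sum_const, Finset.card_range]; ring
  have herr2 : (2:ℝ)^p * ‖z - H t‖ ≤ eF + eG := by
    have hdiffsum : z - H t = (1 / (n : ℂ)) * ∑ s ∈ Finset.range n,
        (Fh s * Gh (t+n-1-s) - F s * G (t+n-1-s)) := by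
      rw [hzformula, hH t, ← mul_sub, ← Finset.sum_sub_distrib]
    rw [hdiffsum, norm_mul, norm_div, norm_one, Complex.norm_natCast]
    calc (2:ℝ)^p * (1 / (n:ℝ) * ‖∑ s ∈ Finset.range n,
          (Fh s * Gh (t+n-1-s) - F s * G (t+n-1-s))‖)
        = (1 / (n:ℝ)) * ((2:ℝ)^p * ‖∑ s ∈ Finset.range n,
          (Fh s * Gh (t+n-1-s) - F s * G (t+n-1-s))‖) := by ring
      _ ≤ (1 / (n:ℝ)) * ((eF + eG) * n) := mul_le_mul_of_nonneg_left hsumbound (by positivity)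
      _ = eF + eG := by field_simp
  have hcancel : (2:ℝ)^(p:ℕ) * (2:ℝ)^(-(p:ℤ)) = 1 := by
    rw [← zpow_natCast (2:ℝ) p, ← zpow_add₀ (by norm_num : (2:ℝ) ≠ 0)]
    simp
  calc (2:ℝ)^p * ‖Hh t - H t‖
      ≤ (2:ℝ)^p * (‖Hh t - z‖ + ‖z - H t‖) := by
        gcongr
        exact norm_sub_le_norm_sub_add_norm_sub _ _ _
    _ ≤ (2:ℝ)^p * (Real.sqrt 2 * (2:ℝ)^(-(p:ℤ))) + (eF + eG) := by
        rw [mul_add]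
        exact add_le_add (by gcongr) herr2
    _ = Real.sqrt 2 + eF + eG := by
        rw [show (2:ℝ)^(p:ℕ) * (Real.sqrt 2 * (2:ℝ)^(-(p:ℤ)))
          = ((2:ℝ)^(p:ℕ) * (2:ℝ)^(-(p:ℤ))) * Real.sqrt 2 from by ring, hcancel, one_mul]
        ring
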